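/- For a vector x ∈ ℝⁿ with nonincreasing nonnegative entries x₁ ≥ x₂ ≥ … ≥ xₙ ≥ 0 and 1 ≤ r ≤ n, the dual of the 'top-r ℓ²' norm evaluates as: (‖x‖_{ℓ²,r})^D = sqrt( Σ_{i=1}^{r-s-1} xᵢ² + (Σ_{i=r-s}^{n} xᵢ)²/(s+1) ), where s is the smallest integer in {0,…,r−1} such that x_{r−s−1} > (Σ_{i=r−s}^{n} xᵢ)/(s+1) (with x₀ := +∞). -/

import Mathlib

open BigOperators Finset

/-- The absolute values of the entries of `x ∈ ℝⁿ`, sorted in nonincreasing order,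
0-indexed: `svVec x 0 = |x|_[1] ≥ svVec x 1 = |x|_[2] ≥ …`. -/
noncomputable def svVec {n : ℕ} (x : Fin n → ℝ) (i : ℕ) : ℝ :=
  (((List.ofFn fun j : Fin n => |x j|).mergeSort (fun a b => decide (a ≥ b))).getD i 0)

/-- The `top-r ℓ²` norm: the ℓ² norm of the `r` largest-magnitude entries. -/
noncomputable def topEll2 {n : ℕ} (r : ℕ) (x : Fin n → ℝ) : ℝ :=
  Real.sqrt (∑ i ∈ Finset.range r, svVec x i ^ 2)

/-- Euclidean (ℓ²) norm on `ℝⁿ`. -/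
noncomputable def euclN {n : ℕ} (x : Fin n → ℝ) : ℝ := Real.sqrt (∑ i, x i ^ 2)

/-- ℓ¹ norm on `ℝⁿ`. -/
noncomputable def l1N {n : ℕ} (x : Fin n → ℝ) : ℝ := ∑ i, |x i|

/-- Number of nonzero entries of `x`. -/
noncomputable def suppCard {n : ℕ} (x : Fin n → ℝ) : ℕ :=
  (Finset.univ.filter fun i => x i ≠ 0).card

/-- The `k`-support norm: infimum of `Σ_g ‖v_g‖₂` over all finite decompositions
`x = Σ_g v_g` where each `v_g` has at most `k` nonzero entries. -/
noncomputable def ksup {n : ℕ} (k : ℕ) (x : Fin n → ℝ) : ℝ :=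
  sInf {c : ℝ | ∃ (N : ℕ) (v : Fin N → (Fin n → ℝ)),
    (∀ g, suppCard (v g) ≤ k) ∧ (∑ g, v g) = x ∧ c = ∑ g, euclN (v g)}

/-- Dual norm on `ℝⁿ` with respect to the standard inner product. -/
noncomputable def dualVec {n : ℕ} (ν : (Fin n → ℝ) → ℝ) (x : Fin n → ℝ) : ℝ :=
  sSup {c : ℝ | ∃ y, ν y ≤ 1 ∧ c = ∑ i, x i * y i}

section svAux

variable {n : ℕ} (y : Fin n → ℝ)

lemma svList_length :
    (((List.ofFn fun j : Fin n => |y j|).mergeSort (fun a b => decide (a ≥ b))).length) = n := by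
  rw [List.length_mergeSort, List.length_ofFn]

lemma svList_sorted :
    List.Pairwise (fun a b : ℝ => a ≥ b)
      ((List.ofFn fun j : Fin n => |y j|).mergeSort (fun a b => decide (a ≥ b))) := by
  have h := List.pairwise_mergeSort (le := fun a b : ℝ => decide (a ≥ b))
    (by intro a b c hab hbc; simp_all; linarith)
    (by intro a b; simpa using le_total b a)
    (List.ofFn fun j : Fin n => |y j|)
  exact h.imp (by intro a b hb; simpa using hb)

lemma svVec_nonneg (i : ℕ) : 0 ≤ svVec y i := by
  unfold svVec
  rcases lt_or_ge i n with hi | hi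
  · rw [List.getD_eq_getElem _ _ (by rw [svList_length]; exact hi)]
    have hmem : (((List.ofFn fun j : Fin n => |y j|).mergeSort (fun a b => decide (a ≥ b)))[i]'
        (by rw [svList_length]; exact hi)) ∈
        ((List.ofFn fun j : Fin n => |y j|).mergeSort (fun a b => decide (a ≥ b))) :=
      List.getElem_mem _
    rw [(List.mergeSort_perm _ _).mem_iff, List.mem_ofFn] at hmem
    obtain ⟨j, hj⟩ := hmem
    rw [← hj]; positivity
  · rw [List.getD_eq_default _ _ (by rw [svList_length]; exact hi)]

lemma svVec_antitone {i j : ℕ} (hij : i ≤ j) : svVec y j ≤ svVec y i := by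
  rcases lt_or_ge j n with hj | hj
  · rcases eq_or_lt_of_le hij with rfl | hlt
    · exact le_refl _
    · unfold svVec
      rw [List.getD_eq_getElem _ _ (by rw [svList_length]; omega),
        List.getD_eq_getElem _ _ (by rw [svList_length]; omega)]
      exact List.pairwise_iff_getElem.1 (svList_sorted y) i j _ _ hlt
  · have hz : svVec y j = 0 := by
      unfold svVec; rw [List.getD_eq_default _ _ (by rw [svList_length]; exact hj)]
    rw [hz]; exact svVec_nonneg y i

lemma ofFn_perm (h : Fin n → ℝ) (π : Equiv.Perm (Fin n)) :
    (List.ofFn (h ∘ π)).Perm (List.ofFn h) := by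
  rw [List.ofFn_eq_map, List.ofFn_eq_map, ← List.map_map]
  refine List.Perm.map h ?_
  apply List.perm_of_nodup_nodup_toFinset_eq
  · exact (List.nodup_finRange n).map π.injective
  · exact List.nodup_finRange n
  · ext a
    simp only [List.mem_toFinset, List.mem_map, List.mem_finRange, true_and]
    exact ⟨fun _ => trivial, fun _ => ⟨π.symm a, by simp⟩⟩

lemma svList_eq_of_sorted (g : Fin n → ℝ)
    (hperm : (List.ofFn g).Perm (List.ofFn fun j : Fin n => |y j|))
    (hsort : ∀ i j : Fin n, i < j → g j ≤ g i) :
    ((List.ofFn fun j : Fin n => |y j|).mergeSort (fun a b => decide (a ≥ b))) = List.ofFn g := by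
  refine (fun hp h1 h2 => List.Perm.eq_of_pairwise (le := fun a b : ℝ => a ≥ b)
    (fun a b _ _ h1 h2 => le_antisymm h2 h1) h1 h2 hp) ?_ ?_ ?_
  · exact (List.mergeSort_perm _ _).trans hperm.symm
  · exact svList_sorted y
  · exact List.pairwise_ofFn.2 (fun i j hij => hsort i j hij)

lemma svVec_exists_perm : ∃ σ : Equiv.Perm (Fin n), ∀ i : Fin n, svVec y (i : ℕ) = |y (σ i)| := by
  set h : Fin n → ℝ := fun j => |y j| with hh
  set π : Equiv.Perm (Fin n) := Fin.revPerm.trans (Tuple.sort h) with hπ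
  have hsort : ∀ i j : Fin n, i < j → (h ∘ π) j ≤ (h ∘ π) i := by
    intro i j hij
    have hm := Tuple.monotone_sort h
    have : j.rev ≤ i.rev := by
      simp [Fin.rev_le_rev]
      exact hij.le
    simpa [hπ, Function.comp] using hm this
  have heq := svList_eq_of_sorted y (h ∘ π) (ofFn_perm h π) hsort
  refine ⟨π, fun i => ?_⟩
  unfold svVec
  rw [heq, List.getD_eq_getElem _ _ (by simp [List.length_ofFn, i.isLt]),
    List.getElem_ofFn]
  simp [hh, Function.comp]

lemma svVec_of_antitone (h1 : ∀ i j : Fin n, i ≤ j → y j ≤ y i) (h0 : ∀ i, 0 ≤ y i)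
    (i : ℕ) (hi : i < n) : svVec y i = y ⟨i, hi⟩ := by
  have habs : (fun j : Fin n => |y j|) = y := by
    funext j; exact abs_of_nonneg (h0 j)
  have heq : ((List.ofFn fun j : Fin n => |y j|).mergeSort (fun a b => decide (a ≥ b)))
      = List.ofFn y := by
    exact svList_eq_of_sorted y y (by rw [habs]) (fun i j hij => h1 i j hij.le)
  unfold svVec
  rw [heq, List.getD_eq_getElem _ _ (by simpa [List.length_ofFn] using hi), List.getElem_ofFn]

lemma rearrange (a : Fin n → ℝ)
    (ha : ∀ i j : Fin n, i ≤ j → a j ≤ a i) (ha0 : ∀ i, 0 ≤ a i) :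
    ∑ i, a i * y i ≤ ∑ i : Fin n, a i * svVec y (i : ℕ) := by
  obtain ⟨σ, hσ⟩ := svVec_exists_perm y
  have step1 : ∑ i, a i * y i ≤ ∑ i, a i * |y i| :=
    Finset.sum_le_sum fun i _ => mul_le_mul_of_nonneg_left (le_abs_self _) (ha0 i)
  refine step1.trans ?_
  set b : Fin n → ℝ := fun i => svVec y (i : ℕ) with hb
  have hmono : Monovary a b := by
    intro i j hij
    have hji : j ≤ i := by
      by_contra h
      push_neg at h
      exact absurd (svVec_antitone y (show (i:ℕ) ≤ j from h.le)) (not_le.2 hij)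
    exact ha j i hji
  have key := hmono.sum_smul_comp_perm_le_sum_smul (σ := σ⁻¹)
  have habs : ∀ i, b (σ⁻¹ i) = |y i| := by
    intro i
    have := hσ (σ⁻¹ i)
    simpa using this
  calc ∑ i, a i * |y i| = ∑ i, a i • b (σ⁻¹ i) := by
        simp only [smul_eq_mul, habs]
    _ ≤ ∑ i, a i • b i := key
    _ = ∑ i, a i * b i := by simp [smul_eq_mul]

end svAux

lemma abel_le (N : ℕ) (d B : ℕ → ℝ)
    (hB : ∀ i j, i ≤ j → j ≤ N → B j ≤ B i) (hB0 : ∀ i, i ≤ N → 0 ≤ B i)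
    (hd : ∀ k, k ≤ N → ∑ i ∈ Finset.range k, d i ≤ 0) :
    ∑ i ∈ Finset.range N, d i * B i ≤ 0 := by
  induction N generalizing B with
  | zero => simp
  | succ N ih =>
    set B' : ℕ → ℝ := fun i => B i - B N with hB'
    have hsplit : ∑ i ∈ Finset.range (N + 1), d i * B i
        = ∑ i ∈ Finset.range (N + 1), d i * B' i + B N * ∑ i ∈ Finset.range (N + 1), d i := by
      rw [Finset.mul_sum, ← Finset.sum_add_distrib]
      congr 1; funext i; ring
    rw [hsplit]
    have h1 : ∑ i ∈ Finset.range (N + 1), d i * B' i ≤ 0 := by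
      rw [Finset.sum_range_succ]
      have hz : d N * B' N = 0 := by simp [hB']
      rw [hz, add_zero]
      refine ih B' (fun i j hij hjN => ?_) (fun i hiN => ?_) (fun k hk => hd k (by omega))
      · simp only [hB']; have := hB i j hij (by omega); linarith
      · simp only [hB']; have := hB i N (by omega) (by omega); linarith
    have h2 : B N * ∑ i ∈ Finset.range (N + 1), d i ≤ 0 :=
      mul_nonpos_of_nonneg_of_nonpos (hB0 N (by omega)) (hd (N + 1) le_rfl)
    linarith

lemma sum_Icc_eq_range' (a k : ℕ) (f : ℕ → ℝ) :
    ∑ i ∈ Finset.Icc (a+1) (a+k), f i = ∑ i ∈ Finset.range k, f (a+1+i) := by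
  rw [← Finset.Ico_add_one_right_eq_Icc, Finset.sum_Ico_eq_sum_range]
  simp [Nat.add_sub_cancel_left]

/-- closed form for the dual of the `top-r ℓ²` norm at a vector with
nonincreasing nonnegative entries `x₁ ≥ … ≥ xₙ ≥ 0` (1-indexed):
`(‖x‖_{ℓ²,r})^D = sqrt (Σ_{i=1}^{r−s−1} xᵢ² + (Σ_{i=r−s}^n xᵢ)²/(s+1))`,
where `s` is the smallest integer in `{0,…,r−1}` with
`x_{r−s−1} > (Σ_{i=r−s}^n xᵢ)/(s+1)` (convention `x₀ = +∞`, encoded by the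
disjunct `s = r − 1`). -/
theorem dual_topEll2_closed_form {n r : ℕ} (hr1 : 1 ≤ r) (hr2 : r ≤ n)
    (x : ℕ → ℝ)
    (hmono : ∀ i j, 1 ≤ i → i ≤ j → j ≤ n → x j ≤ x i)
    (hnonneg : ∀ i, 1 ≤ i → i ≤ n → 0 ≤ x i)
    (s : ℕ) (hs : s < r)
    (hcond : s = r - 1 ∨ (∑ i ∈ Finset.Icc (r - s) n, x i) / (s + 1) < x (r - s - 1))
    (hmin : ∀ t, t < s →
      ¬(t = r - 1 ∨ (∑ i ∈ Finset.Icc (r - t) n, x i) / (t + 1) < x (r - t - 1))) :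
    dualVec (topEll2 r) (fun i : Fin n => x ((i : ℕ) + 1)) =
      Real.sqrt ((∑ i ∈ Finset.Icc 1 (r - s - 1), x i ^ 2) +
        (∑ i ∈ Finset.Icc (r - s) n, x i) ^ 2 / (s + 1)) := by
  -- Notation
  set m : ℕ := r - s - 1 with hm
  have hmr : m + (s + 1) = r := by omega
  have hmn : m < n := by omega
  have hrs : r - s = m + 1 := by omega
  set T : ℝ := ∑ i ∈ Finset.Icc (r - s) n, x i with hT
  set A : ℝ := (∑ i ∈ Finset.Icc 1 m, x i ^ 2) + T ^ 2 / (s + 1) with hA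
  have hs1pos : (0:ℝ) < (s:ℝ) + 1 := by positivity
  -- T as a range sum
  have hTrange : T = ∑ i ∈ Finset.range (n - m), x (m + 1 + i) := by
    rw [hT, hrs, show n = m + (n - m) by omega]
    rw [show m + (n - m) - m = n - m by omega]
    exact sum_Icc_eq_range' m (n - m) x
  have hTnonneg : 0 ≤ T := by
    rw [hTrange]
    exact Finset.sum_nonneg fun i hi => hnonneg _ (by omega)
      (by simp only [Finset.mem_range] at hi; omega)
  -- the pooled value
  have hkey2 : ((s:ℝ) + 1) * x (m + 1) ≤ T := by
    have hIcc2 : ∑ i ∈ Finset.Icc (m+2) n, x i = ∑ i ∈ Finset.range (n-m-1), x (m+2+i) := by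
      have h := sum_Icc_eq_range' (m+1) (n-m-1) x
      rw [show m+1+(n-m-1) = n from by omega] at h
      rw [show m+1+1 = m+2 from by omega] at h
      rw [h]
    have hTsplit : T = x (m+1) + ∑ i ∈ Finset.Icc (m+2) n, x i := by
      rw [hTrange, show n - m = (n-m-1)+1 from by omega, Finset.sum_range_succ', hIcc2]
      have e : ∀ i ∈ Finset.range (n-m-1), x (m+1+(i+1)) = x (m+2+i) := fun i _ => by
        rw [show m+1+(i+1) = m+2+i from by omega]
      rw [Finset.sum_congr rfl e, show m+1+0 = m+1 from by omega]
      ring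
    rcases Nat.eq_zero_or_pos s with hs0 | hs0
    · subst hs0
      simp only [Nat.cast_zero, zero_add, one_mul]
      have hpos : 0 ≤ ∑ i ∈ Finset.Icc (m+2) n, x i := by
        rw [hIcc2]
        exact Finset.sum_nonneg fun i hi => hnonneg _ (by omega)
          (by simp only [Finset.mem_range] at hi; omega)
      linarith
    · have h := hmin (s-1) (by omega)
      push_neg at h
      obtain ⟨-, h2⟩ := h
      rw [show r - (s-1) - 1 = m + 1 from by omega, show r - (s-1) = m + 2 from by omega] at h2
      have e3 : ((s - 1 : ℕ):ℝ) + 1 = (s:ℝ) := by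
        rw [Nat.cast_sub (by omega)]; push_cast; ring
      rw [e3] at h2
      have hspos : (0:ℝ) < (s:ℝ) := by exact_mod_cast hs0
      rw [le_div_iff₀ hspos] at h2
      rw [hTsplit]
      nlinarith [h2]
  have hkey2' : x (m + 1) ≤ T / ((s:ℝ) + 1) := by
    rw [le_div_iff₀ hs1pos]; linarith
  have hkey1 : 1 ≤ m → T / ((s:ℝ) + 1) ≤ x m := by
    intro hm1
    have : ¬ (s = r - 1) := by omega
    rcases hcond with h | h
    · exact absurd h this
    · exact le_of_lt h
  have hApos : 0 ≤ A := by
    rw [hA]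
    have : 0 ≤ ∑ i ∈ Finset.Icc 1 m, x i ^ 2 :=
      Finset.sum_nonneg fun i _ => sq_nonneg _
    positivity
  -- the optimal dual variable profile
  set F : ℕ → ℝ := fun i => if i < m then x (i + 1) else T / ((s:ℝ) + 1) with hF
  have hFnonneg : ∀ i, 0 ≤ F i := by
    intro i
    rw [hF]
    by_cases h : i < m
    · simp only [h, if_pos]; exact hnonneg _ (by omega) (by omega)
    · simp only [h, if_neg, if_false]; positivity
  have hFanti : ∀ i j : ℕ, i ≤ j → F j ≤ F i := by
    intro i j hij
    rw [hF]
    by_cases hi : i < m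
    · by_cases hj : j < m
      · simp only [hi, hj, if_pos]
        exact hmono (i+1) (j+1) (by omega) (by omega) (by omega)
      · simp only [hi, hj, if_pos, if_neg, if_false]
        refine le_trans (hkey1 (by omega)) ?_
        exact hmono (i+1) m (by omega) (by omega) (by omega)
    · have hj : ¬ j < m := by omega
      simp [hi, hj]
  have hIccRange : ∑ i ∈ Finset.Icc 1 m, x i ^ 2 = ∑ i ∈ Finset.range m, x (i + 1) ^ 2 := by
    have := sum_Icc_eq_range' 0 m (fun i => x i ^ 2)
    simpa [add_comm] using this
  have hFsq : ∑ i ∈ Finset.range r, F i ^ 2 = A := by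
    have hsp := Finset.sum_range_add (fun i => F i ^ 2) m (s+1)
    rw [hmr] at hsp
    rw [hsp]
    have e1 : ∀ i ∈ Finset.range m, F i ^ 2 = x (i+1) ^ 2 := fun i hi => by
      simp only [hF]; rw [if_pos (Finset.mem_range.1 hi)]
    have e2 : ∀ i ∈ Finset.range (s+1), F (m+i) ^ 2 = (T/((s:ℝ)+1)) ^ 2 := fun i hi => by
      simp only [hF]; rw [if_neg (by omega)]
    rw [Finset.sum_congr rfl e1, Finset.sum_congr rfl e2, Finset.sum_const, Finset.card_range,
      nsmul_eq_mul, hA, hIccRange]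
    congr 1
    push_cast
    field_simp
  -- upper bound for all elements of the dual set
  have hub : ∀ c ∈ {c : ℝ | ∃ y : Fin n → ℝ, topEll2 r y ≤ 1 ∧
      c = ∑ i, (fun i : Fin n => x ((i : ℕ) + 1)) i * y i}, c ≤ Real.sqrt A := by
    rintro c ⟨y, hy1, rfl⟩
    show (∑ i : Fin n, x ((i:ℕ)+1) * y i) ≤ Real.sqrt A
    set b : ℕ → ℝ := fun i => svVec y i with hb
    have hb1 : ∑ i ∈ Finset.range r, b i ^ 2 ≤ 1 := by
      simp only [topEll2] at hy1
      exact Real.sqrt_le_one.1 hy1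
    have step1 : (∑ i : Fin n, x ((i:ℕ)+1) * y i) ≤ ∑ i ∈ Finset.range n, x (i+1) * b i := by
      have h := rearrange y (fun i : Fin n => x ((i:ℕ)+1))
        (fun i j hij => hmono ((i:ℕ)+1) ((j:ℕ)+1) (by omega)
          (by have h' : (i:ℕ) ≤ (j:ℕ) := hij; omega)
          (by have := j.isLt; omega))
        (fun i => hnonneg _ (by omega) (by have := i.isLt; omega))
      have h2 := Fin.sum_univ_eq_sum_range (fun k => x (k+1) * b k) n
      calc (∑ i : Fin n, x ((i:ℕ)+1) * y i)
          ≤ ∑ i : Fin n, x ((i:ℕ)+1) * svVec y (i:ℕ) := h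
        _ = ∑ i ∈ Finset.range n, x (i+1) * b i := h2
    have hsplitn : ∑ i ∈ Finset.range n, x (i+1) * b i
        = ∑ i ∈ Finset.range m, x (i+1) * b i
          + ∑ i ∈ Finset.range (n-m), x (m+1+i) * b (m+i) := by
      have h := Finset.sum_range_add (fun i => x (i+1) * b i) m (n-m)
      rw [show m + (n-m) = n from by omega] at h
      rw [h]
      congr 1
      exact Finset.sum_congr rfl fun i _ => by rw [show m + i + 1 = m+1+i from by omega]
    set C : ℕ → ℝ := fun i => if i < s + 1 then T/((s:ℝ)+1) else 0 with hC
    have hCsum : ∀ k, k ≤ s+1 → ∑ i ∈ Finset.range k, C i = (k:ℝ) * (T/((s:ℝ)+1)) := by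
      intro k hk
      have e : ∀ i ∈ Finset.range k, C i = T/((s:ℝ)+1) := fun i hi => by
        simp only [hC]; rw [if_pos (by simp only [Finset.mem_range] at hi; omega)]
      rw [Finset.sum_congr rfl e, Finset.sum_const, Finset.card_range, nsmul_eq_mul]
    have habel : ∑ i ∈ Finset.range (n-m), x (m+1+i) * b (m+i)
        ≤ ∑ i ∈ Finset.range (n-m), C i * b (m+i) := by
      have hpre : ∀ k, k ≤ n - m →
          ∑ i ∈ Finset.range k, (x (m+1+i) - C i) ≤ 0 := by
        intro k hk
        rw [Finset.sum_sub_distrib]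
        rcases le_or_gt k (s+1) with hks | hks
        · have h1 : ∑ i ∈ Finset.range k, x (m+1+i) ≤ (k:ℝ) * x (m+1) := by
            have e : ∀ i ∈ Finset.range k, x (m+1+i) ≤ x (m+1) := fun i hi =>
              hmono (m+1) (m+1+i) (by omega) (by omega)
                (by simp only [Finset.mem_range] at hi; omega)
            calc ∑ i ∈ Finset.range k, x (m+1+i) ≤ ∑ _i ∈ Finset.range k, x (m+1) :=
                Finset.sum_le_sum e
              _ = (k:ℝ) * x (m+1) := by
                rw [Finset.sum_const, Finset.card_range, nsmul_eq_mul]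
          rw [hCsum k hks]
          have h2 : (k:ℝ) * x (m+1) ≤ (k:ℝ) * (T/((s:ℝ)+1)) :=
            mul_le_mul_of_nonneg_left hkey2' (Nat.cast_nonneg k)
          linarith
        · have h1 : ∑ i ∈ Finset.range k, x (m+1+i) ≤ T := by
            rw [hTrange]
            apply Finset.sum_le_sum_of_subset_of_nonneg (Finset.range_subset_range.2 (by omega))
            intro i hi _
            exact hnonneg _ (by omega) (by simp only [Finset.mem_range] at hi; omega)
          have h2 : ∑ i ∈ Finset.range k, C i = T := by
            have hsub : Finset.range (s+1) ⊆ Finset.range k := Finset.range_subset_range.2 (by omega)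
            have hzero : ∀ i ∈ Finset.range k, i ∉ Finset.range (s+1) → C i = 0 := by
              intro i _ hi
              simp only [hC]
              rw [if_neg (by simp only [Finset.mem_range] at hi; omega)]
            rw [← Finset.sum_subset hsub hzero, hCsum (s+1) le_rfl]
            push_cast
            field_simp
          linarith
      have h0 := abel_le (n-m) (fun i => x (m+1+i) - C i) (fun i => b (m+i))
        (fun i j hij _ => svVec_antitone y (by omega))
        (fun i _ => svVec_nonneg y _)
        hpre
      have heq : ∑ i ∈ Finset.range (n-m), (x (m+1+i) - C i) * b (m+i)
          = ∑ i ∈ Finset.range (n-m), x (m+1+i) * b (m+i)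
            - ∑ i ∈ Finset.range (n-m), C i * b (m+i) := by
        rw [← Finset.sum_sub_distrib]
        exact Finset.sum_congr rfl fun i _ => by ring
      rw [heq] at h0
      linarith
    have hrange_r : ∑ i ∈ Finset.range m, x (i+1) * b i
          + ∑ i ∈ Finset.range (n-m), C i * b (m+i)
        = ∑ i ∈ Finset.range r, F i * b i := by
      have hsp := Finset.sum_range_add (fun i => F i * b i) m (s+1)
      rw [hmr] at hsp
      rw [hsp]
      congr 1
      · exact Finset.sum_congr rfl fun i hi => by
          simp only [hF]; rw [if_pos (Finset.mem_range.1 hi)]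
      · have hsub : Finset.range (s+1) ⊆ Finset.range (n-m) :=
          Finset.range_subset_range.2 (by omega)
        have hzero : ∀ i ∈ Finset.range (n-m), i ∉ Finset.range (s+1) → C i * b (m+i) = 0 := by
          intro i _ hi
          simp only [hC]
          rw [if_neg (by simp only [Finset.mem_range] at hi; omega), zero_mul]
        rw [← Finset.sum_subset hsub hzero]
        exact Finset.sum_congr rfl fun i hi => by
          simp only [hC, hF]
          rw [if_pos (Finset.mem_range.1 hi), if_neg (by omega)]
    have hcs : ∑ i ∈ Finset.range r, F i * b i ≤ Real.sqrt A := by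
      have h2 := Finset.sum_mul_sq_le_sq_mul_sq (Finset.range r) F b
      have hF2nn : (0:ℝ) ≤ ∑ i ∈ Finset.range r, F i ^ 2 :=
        Finset.sum_nonneg fun i _ => sq_nonneg _
      have h3 : (∑ i ∈ Finset.range r, F i * b i) ^ 2 ≤ A := by
        calc (∑ i ∈ Finset.range r, F i * b i) ^ 2
            ≤ (∑ i ∈ Finset.range r, F i ^ 2) * (∑ i ∈ Finset.range r, b i ^ 2) := h2
          _ ≤ (∑ i ∈ Finset.range r, F i ^ 2) * 1 :=
            mul_le_mul_of_nonneg_left hb1 hF2nn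
          _ = A := by rw [mul_one, hFsq]
      calc ∑ i ∈ Finset.range r, F i * b i ≤ |∑ i ∈ Finset.range r, F i * b i| := le_abs_self _
        _ = Real.sqrt ((∑ i ∈ Finset.range r, F i * b i) ^ 2) := (Real.sqrt_sq_eq_abs _).symm
        _ ≤ Real.sqrt A := Real.sqrt_le_sqrt h3
    linarith
  -- the maximizer
  have hmem : Real.sqrt A ∈ {c : ℝ | ∃ y : Fin n → ℝ, topEll2 r y ≤ 1 ∧
      c = ∑ i, (fun i : Fin n => x ((i : ℕ) + 1)) i * y i} := by
    rcases eq_or_lt_of_le hApos with hA0 | hApos'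
    · refine ⟨0, ?_, ?_⟩
      · simp only [topEll2]
        have e : ∀ i ∈ Finset.range r, svVec (0 : Fin n → ℝ) i ^ 2 = 0 := by
          intro i hi
          rw [svVec_of_antitone (0 : Fin n → ℝ) (fun _ _ _ => le_rfl) (fun _ => le_rfl) i
            (by simp only [Finset.mem_range] at hi; omega)]
          simp
        rw [Finset.sum_congr rfl e]
        simp
      · simp [← hA0]
    · set y : Fin n → ℝ := fun i => F (i:ℕ) / Real.sqrt A with hy
      have hsA : 0 < Real.sqrt A := Real.sqrt_pos.2 hApos'
      have hyanti : ∀ i j : Fin n, i ≤ j → y j ≤ y i := fun i j hij =>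
        div_le_div_of_nonneg_right (hFanti _ _ (by exact hij)) hsA.le
      have hynn : ∀ i : Fin n, 0 ≤ y i := fun i => div_nonneg (hFnonneg _) hsA.le
      have hsv : ∀ i : ℕ, (hi : i < n) → svVec y i = F i / Real.sqrt A := fun i hi =>
        svVec_of_antitone y hyanti hynn i hi
      have hsum1 : ∑ i ∈ Finset.range r, svVec y i ^ 2 = 1 := by
        have e : ∀ i ∈ Finset.range r, svVec y i ^ 2 = F i ^ 2 / A := by
          intro i hi
          rw [hsv i (by simp only [Finset.mem_range] at hi; omega), div_pow,
            Real.sq_sqrt hApos]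
        rw [Finset.sum_congr rfl e, ← Finset.sum_div, hFsq, div_self (ne_of_gt hApos')]
      have hXF : ∑ i ∈ Finset.range n, x (i+1) * F i = A := by
        have hsp := Finset.sum_range_add (fun i => x (i+1) * F i) m (n-m)
        rw [show m + (n-m) = n from by omega] at hsp
        rw [hsp]
        have e1 : ∀ i ∈ Finset.range m, x (i+1) * F i = x (i+1) ^ 2 := by
          intro i hi
          simp only [hF]; rw [if_pos (Finset.mem_range.1 hi)]; ring
        have e2 : ∀ i ∈ Finset.range (n-m), x (m+i+1) * F (m+i)
            = x (m+1+i) * (T/((s:ℝ)+1)) := by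
          intro i hi
          simp only [hF]
          rw [if_neg (by omega), show m+i+1 = m+1+i from by omega]
        rw [Finset.sum_congr rfl e1, Finset.sum_congr rfl e2, ← Finset.sum_mul, ← hTrange,
          hA, hIccRange]
        congr 1
        rw [sq]
        ring
      refine ⟨y, ?_, ?_⟩
      · simp only [topEll2]
        rw [hsum1, Real.sqrt_one]
      · show Real.sqrt A = ∑ i : Fin n, x ((i:ℕ)+1) * y i
        have hconv : ∑ i : Fin n, x ((i:ℕ)+1) * y i
            = (∑ i ∈ Finset.range n, x (i+1) * F i) / Real.sqrt A := by
          rw [Finset.sum_div, ← Fin.sum_univ_eq_sum_range (fun k => x (k+1) * F k / Real.sqrt A) n]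
          exact Finset.sum_congr rfl fun i _ => by simp only [hy]; ring
        rw [hconv, hXF, Real.div_sqrt]
  have hgoal : Real.sqrt ((∑ i ∈ Finset.Icc 1 (r - s - 1), x i ^ 2) +
      (∑ i ∈ Finset.Icc (r - s) n, x i) ^ 2 / ((s:ℝ) + 1)) = Real.sqrt A := by
    rfl
  rw [dualVec, hgoal]
  apply le_antisymm
  · exact csSup_le ⟨Real.sqrt A, hmem⟩ hub
  · exact le_csSup ⟨Real.sqrt A, hub⟩ hmem
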